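/- Consider the scalar linear coupled system ẏ_S = a·y_S + b·y_F, ẏ_F = c·y_S + d·y_F on [t̄, t̄+H] with initial data (ȳ_S, ȳ_F), and the decoupled system obtained by freezing the coupling variables at their initial values: ŷ_S' = a·ŷ_S + b·ȳ_F, ŷ_F' = c·ȳ_S + d·ŷ_F with the same initial data. Then ‖ŷ_S(t̄+H) - y_S(t̄+H)‖ ≤ |b|·K·e^(|a|·H)·H² and ‖ŷ_F(t̄+H) - y_F(t̄+H)‖ ≤ |c|·K'·e^(|d|·H)·H², where K = sup_{[t̄,t̄+H]} |ẏ_F| and K' = sup_{[t̄,t̄+H]} |ẏ_S|. -/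

import Mathlib

open Set Real

private lemma gronwallBound_le_aux {k ε t : ℝ} (hk : 0 ≤ k) (ht : 0 ≤ t) (hε : 0 ≤ ε) :
    gronwallBound 0 k ε t ≤ ε * t * Real.exp (k * t) := by
  rcases eq_or_ne k 0 with rfl | hk0
  · simp [gronwallBound_K0, mul_comm]
  · rw [gronwallBound_of_K_ne_0 hk0]
    simp only [zero_mul, zero_add]
    have h1 : Real.exp (k * t) - 1 ≤ (k * t) * Real.exp (k * t) := by
      have := Real.add_one_le_exp (-(k * t))
      have hpos := Real.exp_pos (k * t)
      have hid : Real.exp (-(k*t)) = (Real.exp (k*t))⁻¹ := Real.exp_neg _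
      rw [hid] at this
      have h2 := mul_le_mul_of_nonneg_right this hpos.le
      rw [inv_mul_cancel₀ hpos.ne'] at h2
      nlinarith
    have hkpos : 0 < k := lt_of_le_of_ne hk (Ne.symm hk0)
    calc ε / k * (Real.exp (k * t) - 1) ≤ ε / k * ((k * t) * Real.exp (k * t)) := by
          apply mul_le_mul_of_nonneg_left h1 (by positivity)
      _ = ε * t * Real.exp (k * t) := by field_simp

/-- Key Grönwall-type estimate for one component. -/
private lemma component_estimate (tb H a b K : ℝ) (hH : 0 < H) (hK : 0 ≤ K)
    (g e : ℝ → ℝ)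
    (he : ∀ t ∈ Set.Icc tb (tb + H), HasDerivAt e (a * e t + b * g t) t)
    (he0 : e tb = 0)
    (hg : ∀ t ∈ Set.Icc tb (tb + H), |g t| ≤ K * (t - tb)) :
    |e (tb + H)| ≤ |b| * K * Real.exp (|a| * H) * H ^ 2 := by
  set ε : ℝ := |b| * K * H with hε
  have hεnn : 0 ≤ ε := by positivity
  have hcont : ContinuousOn e (Set.Icc tb (tb + H)) :=
    fun t ht => ((he t ht).continuousAt).continuousWithinAt
  have hderiv : ∀ x ∈ Set.Ico tb (tb + H),
      HasDerivWithinAt e (a * e x + b * g x) (Set.Ici x) x := fun x hx =>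
    ((he x (Set.mem_Icc_of_Ico hx)).hasDerivWithinAt)
  have hbound : ∀ x ∈ Set.Ico tb (tb + H), ‖a * e x + b * g x‖ ≤ |a| * ‖e x‖ + ε := by
    intro x hx
    have hx' := Set.mem_Icc_of_Ico hx
    have h1 : ‖a * e x + b * g x‖ ≤ |a| * |e x| + |b| * |g x| := by
      calc ‖a * e x + b * g x‖ ≤ |a * e x| + |b * g x| := abs_add_le _ _
        _ = |a| * |e x| + |b| * |g x| := by rw [abs_mul, abs_mul]
    have h2 : |b| * |g x| ≤ ε := by
      have := hg x hx'
      have hxle : x - tb ≤ H := by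
        have := hx'.2; linarith
      have : |g x| ≤ K * H := le_trans this
        (mul_le_mul_of_nonneg_left hxle hK)
      calc |b| * |g x| ≤ |b| * (K * H) :=
            mul_le_mul_of_nonneg_left this (abs_nonneg b)
        _ = ε := by rw [hε]; ring
    calc ‖a * e x + b * g x‖ ≤ |a| * |e x| + |b| * |g x| := h1
      _ ≤ |a| * ‖e x‖ + ε := by
          simp only [Real.norm_eq_abs]; linarith
  have h0 : ‖e tb‖ ≤ 0 := by simp [he0]
  have key := norm_le_gronwallBound_of_norm_deriv_right_le hcont hderiv h0 hbound
    (tb + H) (by constructor <;> linarith)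
  have : gronwallBound 0 |a| ε (tb + H - tb) ≤ ε * H * Real.exp (|a| * H) := by
    have : tb + H - tb = H := by ring
    rw [this]
    exact gronwallBound_le_aux (abs_nonneg a) hH.le hεnn
  have hfin : ‖e (tb + H)‖ ≤ ε * H * Real.exp (|a| * H) := le_trans key this
  rw [Real.norm_eq_abs] at hfin
  calc |e (tb + H)| ≤ ε * H * Real.exp (|a| * H) := hfin
    _ = |b| * K * Real.exp (|a| * H) * H ^ 2 := by rw [hε]; ring

/-- Fully-decoupled splitting estimate (Theorem 1 with `p = 1`) for a scalar
linear test system: freezing the coupling variables at their initial values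
(constant extrapolation) yields an `O(H²)` splitting error. -/
theorem linear_test_system_splitting_error (tb H a b c d : ℝ) (hH : 0 < H)
    (yS yF yhS yhF : ℝ → ℝ)
    -- exact solution of the coupled linear system
    (hyS : ∀ t ∈ Set.Icc tb (tb + H), HasDerivAt yS (a * yS t + b * yF t) t)
    (hyF : ∀ t ∈ Set.Icc tb (tb + H), HasDerivAt yF (c * yS t + d * yF t) t)
    -- decoupled system with frozen coupling variables, same initial data
    (hyhS : ∀ t ∈ Set.Icc tb (tb + H), HasDerivAt yhS (a * yhS t + b * yF tb) t)
    (hyhF : ∀ t ∈ Set.Icc tb (tb + H), HasDerivAt yhF (c * yS tb + d * yhF t) t)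
    (hS0 : yhS tb = yS tb) (hF0 : yhF tb = yF tb)
    (K K' : ℝ)
    (hK : K = sSup ((fun t => |c * yS t + d * yF t|) '' Set.Icc tb (tb + H)))
    (hK' : K' = sSup ((fun t => |a * yS t + b * yF t|) '' Set.Icc tb (tb + H))) :
    |yhS (tb + H) - yS (tb + H)| ≤ |b| * K * Real.exp (|a| * H) * H ^ 2 ∧
    |yhF (tb + H) - yF (tb + H)| ≤ |c| * K' * Real.exp (|d| * H) * H ^ 2 := by
  have htb : tb ∈ Set.Icc tb (tb + H) := ⟨le_refl _, by linarith⟩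
  have hScont : ContinuousOn yS (Set.Icc tb (tb + H)) :=
    fun t ht => ((hyS t ht).continuousAt).continuousWithinAt
  have hFcont : ContinuousOn yF (Set.Icc tb (tb + H)) :=
    fun t ht => ((hyF t ht).continuousAt).continuousWithinAt
  -- the derivative bound functions are continuous on a compact set
  have hFd : ContinuousOn (fun t => |c * yS t + d * yF t|) (Set.Icc tb (tb + H)) :=
    (((continuousOn_const.mul hScont).add (continuousOn_const.mul hFcont)).abs)
  have hSd : ContinuousOn (fun t => |a * yS t + b * yF t|) (Set.Icc tb (tb + H)) :=
    (((continuousOn_const.mul hScont).add (continuousOn_const.mul hFcont)).abs)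
  have hcompact : IsCompact (Set.Icc tb (tb + H)) := isCompact_Icc
  have hbddF : BddAbove ((fun t => |c * yS t + d * yF t|) '' Set.Icc tb (tb + H)) :=
    (hcompact.image_of_continuousOn hFd).bddAbove
  have hbddS : BddAbove ((fun t => |a * yS t + b * yF t|) '' Set.Icc tb (tb + H)) :=
    (hcompact.image_of_continuousOn hSd).bddAbove
  have hKle : ∀ t ∈ Set.Icc tb (tb + H), |c * yS t + d * yF t| ≤ K := by
    intro t ht; rw [hK]; exact le_csSup hbddF (Set.mem_image_of_mem _ ht)
  have hK'le : ∀ t ∈ Set.Icc tb (tb + H), |a * yS t + b * yF t| ≤ K' := by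
    intro t ht; rw [hK']; exact le_csSup hbddS (Set.mem_image_of_mem _ ht)
  have hKnn : 0 ≤ K := le_trans (abs_nonneg _) (hKle tb htb)
  have hK'nn : 0 ≤ K' := le_trans (abs_nonneg _) (hK'le tb htb)
  have hconv : Convex ℝ (Set.Icc tb (tb + H)) := convex_Icc _ _
  -- MVT bounds: |yF tb - yF t| ≤ K (t - tb), similar for yS
  have hFmvt : ∀ t ∈ Set.Icc tb (tb + H), |yF tb - yF t| ≤ K * (t - tb) := by
    intro t ht
    have := hconv.norm_image_sub_le_of_norm_hasDerivWithin_le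
      (f' := fun t => c * yS t + d * yF t)
      (fun x hx => (hyF x hx).hasDerivWithinAt)
      (fun x hx => by rw [Real.norm_eq_abs]; exact hKle x hx) ht htb
    rw [Real.norm_eq_abs, Real.norm_eq_abs, abs_sub_comm tb t,
      abs_of_nonneg (by linarith [ht.1] : (0:ℝ) ≤ t - tb)] at this
    exact this
  have hSmvt : ∀ t ∈ Set.Icc tb (tb + H), |yS tb - yS t| ≤ K' * (t - tb) := by
    intro t ht
    have := hconv.norm_image_sub_le_of_norm_hasDerivWithin_le
      (f' := fun t => a * yS t + b * yF t)
      (fun x hx => (hyS x hx).hasDerivWithinAt)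
      (fun x hx => by rw [Real.norm_eq_abs]; exact hK'le x hx) ht htb
    rw [Real.norm_eq_abs, Real.norm_eq_abs, abs_sub_comm tb t,
      abs_of_nonneg (by linarith [ht.1] : (0:ℝ) ≤ t - tb)] at this
    exact this
  constructor
  · apply component_estimate tb H a b K hH hKnn (fun t => yF tb - yF t)
      (fun t => yhS t - yS t)
    · intro t ht
      have := (hyhS t ht).sub (hyS t ht)
      exact this.congr_deriv (by ring)
    · simp [hS0]
    · exact hFmvt
  · apply component_estimate tb H d c K' hH hK'nn (fun t => yS tb - yS t)
      (fun t => yhF t - yF t)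
    · intro t ht
      have := (hyhF t ht).sub (hyF t ht)
      exact this.congr_deriv (by ring)
    · simp [hF0]
    · exact hSmvt
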